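/- For every n ≥ 4, S_n({231, 312, 321, 1324}) consists exactly of the identity and the permutations (1,2), (n−1,n), and (1,2)(n−1,n), and hence the subgroup ⟨S_n({231, 312, 321, 1324})⟩ of S_n is isomorphic to ℤ_2 × ℤ_2. -/

import Mathlib

/-- A permutation `π ∈ S_n` contains the pattern `τ ∈ S_k` if there is a strictly
increasing `f : Fin k → Fin n` such that `τ a < τ b ↔ π (f a) < π (f b)`. -/
def PermContains {k n : ℕ} (τ : Equiv.Perm (Fin k)) (π : Equiv.Perm (Fin n)) : Prop :=
  ∃ f : Fin k → Fin n, StrictMono f ∧ ∀ a b : Fin k, τ a < τ b ↔ π (f a) < π (f b)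

/-- `avoidSet n T` is `S_n(T)`: the permutations of `Fin n` avoiding every pattern in `T`,
where `T` is a set of permutations of arbitrary lengths. -/
def avoidSet (n : ℕ) (T : Set (Σ k : ℕ, Equiv.Perm (Fin k))) : Set (Equiv.Perm (Fin n)) :=
  {π | ∀ τ ∈ T, ¬ PermContains τ.2 π}
def p231 : Equiv.Perm (Fin 3) := finRotate 3
def p312 : Equiv.Perm (Fin 3) := (finRotate 3)⁻¹
def p321 : Equiv.Perm (Fin 3) := Equiv.swap 0 2
/-- The pattern 1324. -/
def p1324 : Equiv.Perm (Fin 4) := Equiv.swap 1 2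

namespace AvoidKlein

def Tset : Set (Σ k : ℕ, Equiv.Perm (Fin k)) := {⟨3, p231⟩, ⟨3, p312⟩, ⟨3, p321⟩, ⟨4, p1324⟩}

lemma strictMono3 {n : ℕ} (f : Fin 3 → Fin n) (h01 : f 0 < f 1) (h12 : f 1 < f 2) :
    StrictMono f := by
  intro a b hab
  fin_cases a <;> fin_cases b <;> simp_all <;> exact h01.trans h12

lemma strictMono4 {n : ℕ} (f : Fin 4 → Fin n) (h01 : f 0 < f 1) (h12 : f 1 < f 2)
    (h23 : f 2 < f 3) : StrictMono f := by
  intro a b hab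
  fin_cases a <;> fin_cases b <;> simp_all <;>
    first
      | exact h01.trans h12
      | exact h12.trans h23
      | exact (h01.trans h12).trans h23

lemma contains_p231 {n : ℕ} (π : Equiv.Perm (Fin n)) (i j k : Fin n) (h1 : i < j) (h2 : j < k)
    (hab : π i < π j) (hca : π k < π i) : PermContains p231 π := by
  have hac : π k < π j := hca.trans hab
  refine ⟨![i, j, k], strictMono3 _ (by simpa using h1) (by simpa using h2), ?_⟩
  intro a b
  fin_cases a <;> fin_cases b <;> simp only [Matrix.cons_val_zero, Matrix.cons_val_one,
      Matrix.head_cons, Matrix.cons_val_two, Matrix.tail_cons] <;> constructor <;> intro h' <;>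
    first
      | exact absurd h' (by decide)
      | decide
      | assumption
      | exact absurd h' (lt_asymm hab)
      | exact absurd h' (lt_asymm hca)
      | exact absurd h' (lt_asymm hac)
      | exact absurd h' (lt_irrefl _)

lemma contains_p312 {n : ℕ} (π : Equiv.Perm (Fin n)) (i j k : Fin n) (h1 : i < j) (h2 : j < k)
    (hbc : π j < π k) (hca : π k < π i) : PermContains p312 π := by
  have hba : π j < π i := hbc.trans hca
  refine ⟨![i, j, k], strictMono3 _ (by simpa using h1) (by simpa using h2), ?_⟩
  intro a b
  fin_cases a <;> fin_cases b <;> simp only [Matrix.cons_val_zero, Matrix.cons_val_one,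
      Matrix.head_cons, Matrix.cons_val_two, Matrix.tail_cons] <;> constructor <;> intro h' <;>
    first
      | exact absurd h' (by decide)
      | decide
      | assumption
      | exact absurd h' (lt_asymm hbc)
      | exact absurd h' (lt_asymm hca)
      | exact absurd h' (lt_asymm hba)
      | exact absurd h' (lt_irrefl _)

lemma contains_p321 {n : ℕ} (π : Equiv.Perm (Fin n)) (i j k : Fin n) (h1 : i < j) (h2 : j < k)
    (hcb : π k < π j) (hba : π j < π i) : PermContains p321 π := by
  have hca : π k < π i := hcb.trans hba
  refine ⟨![i, j, k], strictMono3 _ (by simpa using h1) (by simpa using h2), ?_⟩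
  intro a b
  fin_cases a <;> fin_cases b <;> simp only [Matrix.cons_val_zero, Matrix.cons_val_one,
      Matrix.head_cons, Matrix.cons_val_two, Matrix.tail_cons] <;> constructor <;> intro h' <;>
    first
      | exact absurd h' (by decide)
      | decide
      | assumption
      | exact absurd h' (lt_asymm hcb)
      | exact absurd h' (lt_asymm hca)
      | exact absurd h' (lt_asymm hba)
      | exact absurd h' (lt_irrefl _)

lemma contains_p1324 {n : ℕ} (π : Equiv.Perm (Fin n)) (i j k l : Fin n) (h1 : i < j)
    (h2 : j < k) (h3 : k < l) (hac : π i < π k) (hcb : π k < π j) (hbd : π j < π l) :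
    PermContains p1324 π := by
  have hab : π i < π j := hac.trans hcb
  have hcd : π k < π l := hcb.trans hbd
  have had : π i < π l := hab.trans hbd
  refine ⟨![i, j, k, l], strictMono4 _ (by simpa using h1) (by simpa using h2)
    (by simpa using h3), ?_⟩
  intro a b
  fin_cases a <;> fin_cases b <;> simp only [Matrix.cons_val_zero, Matrix.cons_val_one,
      Matrix.head_cons, Matrix.cons_val_two, Matrix.tail_cons, Matrix.cons_val_three] <;>
    constructor <;> intro h' <;>
    first
      | exact absurd h' (by decide)
      | decide
      | assumption
      | exact absurd h' (lt_asymm hac)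
      | exact absurd h' (lt_asymm hcb)
      | exact absurd h' (lt_asymm hbd)
      | exact absurd h' (lt_asymm hab)
      | exact absurd h' (lt_asymm hcd)
      | exact absurd h' (lt_asymm had)
      | exact absurd h' (lt_irrefl _)

variable {n : ℕ}

lemma pi_congr (π : Equiv.Perm (Fin n)) {a b : ℕ} (ha : a < n) (hb : b < n) (h : a = b) :
    π ⟨a, ha⟩ = π ⟨b, hb⟩ := by subst h; rfl

lemma inj_vals (π : Equiv.Perm (Fin n)) {a b : ℕ} (ha : a < n) (hb : b < n) {va vb : ℕ}
    (hva : (π ⟨a, ha⟩ : ℕ) = va) (hvb : (π ⟨b, hb⟩ : ℕ) = vb) (hne : a ≠ b) : va ≠ vb := by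
  intro h
  apply hne
  have : π ⟨a, ha⟩ = π ⟨b, hb⟩ := Fin.ext (by omega)
  simpa [Fin.mk.injEq] using π.injective this

lemma key_of_mem (π : Equiv.Perm (Fin n)) (hπ : π ∈ avoidSet n Tset) :
    ∀ i k : Fin n, (i : ℕ) + 2 ≤ (k : ℕ) → π i < π k := by
  intro i k hik
  by_contra hc
  push_neg at hc
  have hne : π k ≠ π i := fun h => by
    have := congrArg Fin.val (π.injective h)
    omega
  have hki : π k < π i := lt_of_le_of_ne hc hne
  have hj : (i : ℕ) + 1 < n := by have := k.isLt; omega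
  set j : Fin n := ⟨(i : ℕ) + 1, hj⟩ with hjdef
  have h1 : i < j := by
    rw [Fin.lt_def]; exact Nat.lt_succ_self _
  have h2 : j < k := by
    rw [Fin.lt_def]; show (i : ℕ) + 1 < (k : ℕ); omega
  rcases lt_trichotomy (π j) (π k) with h | h | h
  · exact hπ ⟨3, p312⟩ (by simp [Tset]) (contains_p312 π i j k h1 h2 h hki)
  · refine absurd (congrArg Fin.val (π.injective h)) ?_
    show ¬((i : ℕ) + 1 = (k : ℕ)); omega
  · rcases lt_trichotomy (π i) (π j) with h' | h' | h'
    · exact hπ ⟨3, p231⟩ (by simp [Tset]) (contains_p231 π i j k h1 h2 h' hki)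
    · refine absurd (congrArg Fin.val (π.injective h')) ?_
      show ¬((i : ℕ) = (i : ℕ) + 1); omega
    · exact hπ ⟨3, p321⟩ (by simp [Tset]) (contains_p321 π i j k h1 h2 h h')

lemma cond1_of_key (π : Equiv.Perm (Fin n))
    (key : ∀ i k : Fin n, (i : ℕ) + 2 ≤ (k : ℕ) → π i < π k) :
    ∀ i : Fin n, (i : ℕ) ≤ (π i : ℕ) + 1 ∧ (π i : ℕ) ≤ (i : ℕ) + 1 := by
  intro i
  constructor
  · by_cases h : (i : ℕ) ≤ 1
    · omega
    · have h2 : (i : ℕ) - 2 < n := by have := i.isLt; omega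
      have hcard : (Finset.Iic (⟨(i : ℕ) - 2, h2⟩ : Fin n)).card ≤ (Finset.Iio (π i)).card := by
        apply Finset.card_le_card_of_injOn π
        · intro x hx
          simp only [Finset.mem_coe, Finset.mem_Iic] at hx
          simp only [Finset.mem_coe, Finset.mem_Iio]
          have hx' : (x : ℕ) ≤ (i : ℕ) - 2 := hx
          exact key x i (by omega)
        · exact fun a _ b _ hab => π.injective hab
      rw [Fin.card_Iic, Fin.card_Iio] at hcard
      have hcard' : (i : ℕ) - 2 + 1 ≤ (π i : ℕ) := hcard
      omega
  · by_cases h : n ≤ (i : ℕ) + 2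
    · have := (π i).isLt; omega
    · have h2 : (i : ℕ) + 2 < n := by omega
      have hcard : (Finset.Ici (⟨(i : ℕ) + 2, h2⟩ : Fin n)).card ≤ (Finset.Ioi (π i)).card := by
        apply Finset.card_le_card_of_injOn π
        · intro x hx
          simp only [Finset.mem_coe, Finset.mem_Ici] at hx
          simp only [Finset.mem_coe, Finset.mem_Ioi]
          have hx' : (i : ℕ) + 2 ≤ (x : ℕ) := hx
          exact key i x (by omega)
        · exact fun a _ b _ hab => π.injective hab
      rw [Fin.card_Ici, Fin.card_Ioi] at hcard
      have := (π i).isLt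
      have hcard' : n - ((i : ℕ) + 2) ≤ n - 1 - (π i : ℕ) := hcard
      omega

lemma run_lemma (π : Equiv.Perm (Fin n))
    (c1 : ∀ i : Fin n, (i : ℕ) ≤ (π i : ℕ) + 1 ∧ (π i : ℕ) ≤ (i : ℕ) + 1)
    (i : ℕ) (hi : i + 1 < n) (h : (π ⟨i, by omega⟩ : ℕ) = i + 1) :
    (π ⟨i + 1, hi⟩ : ℕ) = i := by
  by_contra hne
  have hb : i + 1 ≤ (π ⟨i + 1, hi⟩ : ℕ) + 1 ∧ (π ⟨i + 1, hi⟩ : ℕ) ≤ i + 1 + 1 :=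
    c1 ⟨i + 1, hi⟩
  have hne1 : (π ⟨i + 1, hi⟩ : ℕ) ≠ i + 1 :=
    fun heq => inj_vals π hi (by omega) heq h (by omega) rfl
  have h2 : (π ⟨i + 1, hi⟩ : ℕ) = i + 2 := by omega
  have chain : ∀ m, ∀ hm : i + 1 + m < n,
      (π ⟨i + m, by omega⟩ : ℕ) = i + 1 + m ∧ (π ⟨i + 1 + m, hm⟩ : ℕ) = i + 2 + m := by
    intro m
    induction m with
    | zero => exact fun hm => ⟨h, h2⟩
    | succ m ih =>
      intro hm
      have hm' : i + 1 + m < n := by omega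
      obtain ⟨ihA, ihB⟩ := ih hm'
      have e1 : π (⟨i + (m + 1), by omega⟩ : Fin n) = π ⟨i + 1 + m, hm'⟩ :=
        pi_congr π _ _ (by omega)
      have hA : (π (⟨i + (m + 1), by omega⟩ : Fin n) : ℕ) = i + 1 + (m + 1) := by
        rw [e1]; omega
      refine ⟨hA, ?_⟩
      have hh : i + 2 + m < n := by omega
      have e2 : π (⟨i + 1 + (m + 1), hm⟩ : Fin n) = π ⟨i + 2 + m, hh⟩ :=
        pi_congr π _ _ (by omega)
      rw [e2]
      have hb2 : i + 2 + m ≤ (π ⟨i + 2 + m, hh⟩ : ℕ) + 1 ∧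
          (π ⟨i + 2 + m, hh⟩ : ℕ) ≤ i + 2 + m + 1 := c1 ⟨i + 2 + m, hh⟩
      have hx1 : (π ⟨i + 2 + m, hh⟩ : ℕ) ≠ i + 1 + m :=
        fun heq => inj_vals π hh (by omega) heq ihA (by omega) rfl
      have hx2 : (π ⟨i + 2 + m, hh⟩ : ℕ) ≠ i + 2 + m :=
        fun heq => inj_vals π hh hm' heq ihB (by omega) rfl
      omega
  have hlt : i + 2 < n := by have := (π ⟨i + 1, hi⟩).isLt; omega
  have hfin : i + 1 + (n - 2 - i) < n := by omega
  have hlast := (chain (n - 2 - i) hfin).2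
  have := (π ⟨i + 1 + (n - 2 - i), hfin⟩).isLt
  omega

lemma cond1_inv (π : Equiv.Perm (Fin n))
    (c1 : ∀ i : Fin n, (i : ℕ) ≤ (π i : ℕ) + 1 ∧ (π i : ℕ) ≤ (i : ℕ) + 1) :
    ∀ j : Fin n, (j : ℕ) ≤ (π⁻¹ j : ℕ) + 1 ∧ (π⁻¹ j : ℕ) ≤ (j : ℕ) + 1 := by
  intro j
  have := c1 (π⁻¹ j)
  rw [show π (π⁻¹ j) = j from (Equiv.eq_symm_apply π).mp rfl] at this
  omega

lemma down_lemma (π : Equiv.Perm (Fin n))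
    (c1 : ∀ i : Fin n, (i : ℕ) ≤ (π i : ℕ) + 1 ∧ (π i : ℕ) ≤ (i : ℕ) + 1)
    (i : ℕ) (hi : i + 1 < n) (h : (π ⟨i + 1, hi⟩ : ℕ) = i) :
    (π ⟨i, by omega⟩ : ℕ) = i + 1 := by
  have hi' : i < n := by omega
  have hinv : (π⁻¹ ⟨i, hi'⟩ : ℕ) = i + 1 := by
    have heq : π ⟨i + 1, hi⟩ = ⟨i, hi'⟩ := Fin.ext h
    rw [← heq, show π⁻¹ (π ⟨i + 1, hi⟩) = ⟨i + 1, hi⟩ from Equiv.Perm.inv_eq_iff_eq.mpr rfl]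
  have hrun := run_lemma π⁻¹ (cond1_inv π c1) i hi hinv
  have heq2 : π⁻¹ ⟨i + 1, hi⟩ = ⟨i, hi'⟩ := Fin.ext hrun
  have := congrArg π heq2
  rw [show π (π⁻¹ ⟨i + 1, hi⟩) = ⟨i + 1, hi⟩ from (Equiv.eq_symm_apply π).mp rfl] at this
  exact congrArg Fin.val this.symm
lemma swap_end (π : Equiv.Perm (Fin n)) (hπ : π ∈ avoidSet n Tset)
    (c1 : ∀ i : Fin n, (i : ℕ) ≤ (π i : ℕ) + 1 ∧ (π i : ℕ) ≤ (i : ℕ) + 1)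
    (i : ℕ) (hi : i < n) (h : (π ⟨i, hi⟩ : ℕ) = i + 1) : i = 0 ∨ i = n - 2 := by
  by_contra hcon
  push_neg at hcon
  have hi1 : i + 1 < n := by have := (π ⟨i, hi⟩).isLt; omega
  have h1 : 1 ≤ i := by omega
  have h3 : i + 2 < n := by omega
  -- values at i-1, i, i+1, i+2
  have hrun : (π ⟨i + 1, hi1⟩ : ℕ) = i := run_lemma π c1 i hi1 h
  have hm1 : i - 1 < n := by omega
  have hv0b : (i : ℕ) - 1 ≤ (π ⟨i - 1, hm1⟩ : ℕ) + 1 ∧ (π ⟨i - 1, hm1⟩ : ℕ) ≤ i - 1 + 1 :=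
    c1 ⟨i - 1, hm1⟩
  have hv0 : (π ⟨i - 1, hm1⟩ : ℕ) ≤ i - 1 := by
    rcases Nat.lt_or_ge (π ⟨i - 1, hm1⟩ : ℕ) i with h' | h'
    · omega
    · exfalso
      have hvi : (π ⟨i - 1, hm1⟩ : ℕ) = i := by omega
      -- then run_lemma at i-1 : π ⟨i⟩ = i - 1, contradicting h
      have e : (π ⟨i - 1, hm1⟩ : ℕ) = (i - 1) + 1 := by omega
      have hi1' : (i - 1) + 1 < n := by omega
      have := run_lemma π c1 (i - 1) hi1' e
      have e2 : π (⟨(i - 1) + 1, hi1'⟩ : Fin n) = π ⟨i, hi⟩ := pi_congr π _ _ (by omega)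
      rw [e2] at this
      omega
  have hv3b : i + 2 ≤ (π ⟨i + 2, h3⟩ : ℕ) + 1 ∧ (π ⟨i + 2, h3⟩ : ℕ) ≤ i + 2 + 1 :=
    c1 ⟨i + 2, h3⟩
  have hv3 : i + 2 ≤ (π ⟨i + 2, h3⟩ : ℕ) := by
    have hne : (π ⟨i + 2, h3⟩ : ℕ) ≠ i + 1 :=
      fun heq => inj_vals π h3 hi heq h (by omega) rfl
    omega
  refine hπ ⟨4, p1324⟩ (by simp [Tset]) ?_
  refine contains_p1324 π ⟨i - 1, hm1⟩ ⟨i, hi⟩ ⟨i + 1, hi1⟩ ⟨i + 2, h3⟩ ?_ ?_ ?_ ?_ ?_ ?_ <;>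
    first | (rw [Fin.mk_lt_mk]; omega) | (rw [Fin.lt_def]; omega)

lemma middle_fix (π : Equiv.Perm (Fin n)) (hπ : π ∈ avoidSet n Tset)
    (c1 : ∀ i : Fin n, (i : ℕ) ≤ (π i : ℕ) + 1 ∧ (π i : ℕ) ≤ (i : ℕ) + 1)
    (i : Fin n) (h2 : 2 ≤ (i : ℕ)) (h3 : (i : ℕ) ≤ n - 3) : (π i : ℕ) = (i : ℕ) := by
  have hb := c1 i
  have hiv : i = ⟨(i : ℕ), i.isLt⟩ := Fin.ext rfl
  have hne1 : (π i : ℕ) ≠ (i : ℕ) + 1 := by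
    intro heq
    rw [hiv] at heq
    rcases swap_end π hπ c1 (i : ℕ) i.isLt heq with h' | h' <;> omega
  have hne2 : (π i : ℕ) ≠ (i : ℕ) - 1 := by
    intro heq
    have hi1 : ((i : ℕ) - 1) + 1 < n := by have := i.isLt; omega
    have heq' : (π ⟨((i : ℕ) - 1) + 1, hi1⟩ : ℕ) = (i : ℕ) - 1 := by
      rw [pi_congr π hi1 i.isLt (by omega), ← hiv]; exact heq
    have hdown := down_lemma π c1 ((i : ℕ) - 1) hi1 heq'
    rcases swap_end π hπ c1 ((i : ℕ) - 1) (by omega) hdown with h' | h' <;> omega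
  omega

lemma swap_val_table (u v : ℕ) (hu : u < n) (hv : v < n) (huv : u ≠ v) (i : Fin n) :
    ((Equiv.swap (⟨u, hu⟩ : Fin n) ⟨v, hv⟩) i : ℕ) =
      if (i : ℕ) = u then v else if (i : ℕ) = v then u else (i : ℕ) := by
  by_cases h1 : (i : ℕ) = u
  · rw [show i = ⟨u, hu⟩ from Fin.ext h1, Equiv.swap_apply_left, if_pos rfl]
  · by_cases h2 : (i : ℕ) = v
    · rw [show i = ⟨v, hv⟩ from Fin.ext h2, Equiv.swap_apply_right, if_neg (by show ¬(v = u); omega),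
        if_pos rfl]
    · rw [Equiv.swap_apply_of_ne_of_ne (fun he => h1 (congrArg Fin.val he))
        (fun he => h2 (congrArg Fin.val he)), if_neg h1, if_neg h2]
lemma mem_four (hn : 4 ≤ n) (π : Equiv.Perm (Fin n)) (hπ : π ∈ avoidSet n Tset) :
    π = 1 ∨
    π = Equiv.swap (⟨0, by have := hn; omega⟩ : Fin n) ⟨1, by have := hn; omega⟩ ∨
    π = Equiv.swap (⟨n - 2, by have := hn; omega⟩ : Fin n) ⟨n - 1, by have := hn; omega⟩ ∨
    π = Equiv.swap (⟨0, by have := hn; omega⟩ : Fin n) ⟨1, by have := hn; omega⟩ *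
        Equiv.swap (⟨n - 2, by have := hn; omega⟩ : Fin n) ⟨n - 1, by have := hn; omega⟩ := by
  have c1 := cond1_of_key π (key_of_mem π hπ)
  have h0n : (0 : ℕ) < n := by omega
  have h1n : (1 : ℕ) < n := by omega
  have hn2 : n - 2 < n := by omega
  have hn1 : n - 1 < n := by omega
  have hbot : ((π ⟨0, h0n⟩ : ℕ) = 0 ∧ (π ⟨1, h1n⟩ : ℕ) = 1) ∨
      ((π ⟨0, h0n⟩ : ℕ) = 1 ∧ (π ⟨1, h1n⟩ : ℕ) = 0) := by
    have hb0 : (0 : ℕ) ≤ (π ⟨0, h0n⟩ : ℕ) + 1 ∧ (π ⟨0, h0n⟩ : ℕ) ≤ 0 + 1 := c1 ⟨0, h0n⟩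
    by_cases h : (π ⟨0, h0n⟩ : ℕ) = 1
    · right
      refine ⟨h, ?_⟩
      exact run_lemma π c1 0 h1n h
    · left
      have h0 : (π ⟨0, h0n⟩ : ℕ) = 0 := by omega
      refine ⟨h0, ?_⟩
      have hb1 : (1 : ℕ) ≤ (π ⟨1, h1n⟩ : ℕ) + 1 ∧ (π ⟨1, h1n⟩ : ℕ) ≤ 1 + 1 := c1 ⟨1, h1n⟩
      have hne0 : (π ⟨1, h1n⟩ : ℕ) ≠ 0 :=
        fun heq => inj_vals π h1n h0n heq h0 (by omega) rfl
      have hne2 : (π ⟨1, h1n⟩ : ℕ) ≠ 2 := by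
        intro heq
        rcases swap_end π hπ c1 1 h1n heq with h' | h' <;> omega
      omega
  have htop : ((π ⟨n - 2, hn2⟩ : ℕ) = n - 2 ∧ (π ⟨n - 1, hn1⟩ : ℕ) = n - 1) ∨
      ((π ⟨n - 2, hn2⟩ : ℕ) = n - 1 ∧ (π ⟨n - 1, hn1⟩ : ℕ) = n - 2) := by
    have hbt : (n - 2 : ℕ) ≤ (π ⟨n - 2, hn2⟩ : ℕ) + 1 ∧ (π ⟨n - 2, hn2⟩ : ℕ) ≤ n - 2 + 1 :=
      c1 ⟨n - 2, hn2⟩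
    have hne3 : (π ⟨n - 2, hn2⟩ : ℕ) ≠ n - 3 := by
      intro heq
      have hi1 : (n - 3) + 1 < n := by omega
      have heq' : (π ⟨(n - 3) + 1, hi1⟩ : ℕ) = n - 3 := by
        rw [pi_congr π hi1 hn2 (by omega)]; exact heq
      have hdown := down_lemma π c1 (n - 3) hi1 heq'
      rcases swap_end π hπ c1 (n - 3) (by omega) hdown with h' | h' <;> omega
    by_cases h : (π ⟨n - 2, hn2⟩ : ℕ) = n - 1
    · right
      refine ⟨h, ?_⟩
      have heq' : (π ⟨n - 2, hn2⟩ : ℕ) = (n - 2) + 1 := by omega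
      have hi1 : (n - 2) + 1 < n := by omega
      have hrun := run_lemma π c1 (n - 2) hi1 heq'
      rw [pi_congr π hn1 hi1 (by omega)]
      exact hrun
    · left
      have h2 : (π ⟨n - 2, hn2⟩ : ℕ) = n - 2 := by omega
      refine ⟨h2, ?_⟩
      have hb1 : (n - 1 : ℕ) ≤ (π ⟨n - 1, hn1⟩ : ℕ) + 1 ∧ (π ⟨n - 1, hn1⟩ : ℕ) ≤ n - 1 + 1 :=
        c1 ⟨n - 1, hn1⟩
      have hlt := (π ⟨n - 1, hn1⟩).isLt
      have hne : (π ⟨n - 1, hn1⟩ : ℕ) ≠ n - 2 :=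
        fun heq => inj_vals π hn1 hn2 heq h2 (by omega) rfl
      omega
  have hmid : ∀ i : Fin n, 2 ≤ (i : ℕ) → (i : ℕ) ≤ n - 3 → (π i : ℕ) = (i : ℕ) :=
    fun i h2 h3 => middle_fix π hπ c1 i h2 h3
  have hclass : ∀ i : Fin n, (i : ℕ) = 0 ∨ (i : ℕ) = 1 ∨ (i : ℕ) = n - 2 ∨ (i : ℕ) = n - 1 ∨
      (2 ≤ (i : ℕ) ∧ (i : ℕ) ≤ n - 3) := fun i => by have := i.isLt; omega
  rcases hbot with ⟨hb0, hb1⟩ | ⟨hb0, hb1⟩ <;> rcases htop with ⟨ht0, ht1⟩ | ⟨ht0, ht1⟩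
  · -- identity
    left
    refine Equiv.ext fun i => Fin.ext ?_
    rw [Equiv.Perm.one_apply]
    rcases hclass i with h | h | h | h | ⟨h, h'⟩
    · rw [show i = ⟨0, h0n⟩ from Fin.ext h] at *; omega
    · rw [show i = ⟨1, h1n⟩ from Fin.ext h] at *; omega
    · rw [show i = ⟨n - 2, hn2⟩ from Fin.ext h] at *; omega
    · rw [show i = ⟨n - 1, hn1⟩ from Fin.ext h] at *; omega
    · exact hmid i h h'
  · -- top swap
    right; right; left
    refine Equiv.ext fun i => Fin.ext ?_
    rw [swap_val_table (n - 2) (n - 1) hn2 hn1 (by omega) i]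
    rcases hclass i with h | h | h | h | ⟨h, h'⟩
    · have hv : (π i : ℕ) = 0 := by rw [show i = ⟨0, h0n⟩ from Fin.ext h]; exact hb0
      rw [hv]; split_ifs <;> omega
    · have hv : (π i : ℕ) = 1 := by rw [show i = ⟨1, h1n⟩ from Fin.ext h]; exact hb1
      rw [hv]; split_ifs <;> omega
    · have hv : (π i : ℕ) = n - 1 := by rw [show i = ⟨n - 2, hn2⟩ from Fin.ext h]; exact ht0
      rw [hv]; split_ifs <;> omega
    · have hv : (π i : ℕ) = n - 2 := by rw [show i = ⟨n - 1, hn1⟩ from Fin.ext h]; exact ht1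
      rw [hv]; split_ifs <;> omega
    · rw [hmid i h h']; split_ifs <;> omega
  · -- bottom swap
    right; left
    refine Equiv.ext fun i => Fin.ext ?_
    rw [swap_val_table 0 1 h0n h1n (by omega) i]
    rcases hclass i with h | h | h | h | ⟨h, h'⟩
    · have hv : (π i : ℕ) = 1 := by rw [show i = ⟨0, h0n⟩ from Fin.ext h]; exact hb0
      rw [hv]; split_ifs <;> omega
    · have hv : (π i : ℕ) = 0 := by rw [show i = ⟨1, h1n⟩ from Fin.ext h]; exact hb1
      rw [hv]; split_ifs <;> omega
    · have hv : (π i : ℕ) = n - 2 := by rw [show i = ⟨n - 2, hn2⟩ from Fin.ext h]; exact ht0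
      rw [hv]; split_ifs <;> omega
    · have hv : (π i : ℕ) = n - 1 := by rw [show i = ⟨n - 1, hn1⟩ from Fin.ext h]; exact ht1
      rw [hv]; split_ifs <;> omega
    · rw [hmid i h h']; split_ifs <;> omega
  · -- both swaps
    right; right; right
    refine Equiv.ext fun i => Fin.ext ?_
    rw [Equiv.Perm.mul_apply,
      swap_val_table 0 1 h0n h1n (by omega)
        ((Equiv.swap (⟨n - 2, by have := hn; omega⟩ : Fin n) ⟨n - 1, by have := hn; omega⟩) i),
      swap_val_table (n - 2) (n - 1) hn2 hn1 (by omega) i]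
    rcases hclass i with h | h | h | h | ⟨h, h'⟩
    · have hv : (π i : ℕ) = 1 := by rw [show i = ⟨0, h0n⟩ from Fin.ext h]; exact hb0
      rw [hv]; split_ifs <;> omega
    · have hv : (π i : ℕ) = 0 := by rw [show i = ⟨1, h1n⟩ from Fin.ext h]; exact hb1
      rw [hv]; split_ifs <;> omega
    · have hv : (π i : ℕ) = n - 1 := by rw [show i = ⟨n - 2, hn2⟩ from Fin.ext h]; exact ht0
      rw [hv]; split_ifs <;> omega
    · have hv : (π i : ℕ) = n - 2 := by rw [show i = ⟨n - 1, hn1⟩ from Fin.ext h]; exact ht1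
      rw [hv]; split_ifs <;> omega
    · rw [hmid i h h']; split_ifs <;> omega
lemma key_of_cond1 (π : Equiv.Perm (Fin n))
    (c1 : ∀ i : Fin n, (i : ℕ) ≤ (π i : ℕ) + 1 ∧ (π i : ℕ) ≤ (i : ℕ) + 1) :
    ∀ i k : Fin n, (i : ℕ) + 2 ≤ (k : ℕ) → π i < π k := by
  intro i k hik
  have hi := c1 i
  have hk := c1 k
  have hne : (π i : ℕ) ≠ (π k : ℕ) := by
    intro h
    have := congrArg Fin.val (π.injective (Fin.ext h))
    omega
  rw [Fin.lt_def]
  omega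

lemma avoid_of (hn : 4 ≤ n) (π : Equiv.Perm (Fin n))
    (c1 : ∀ i : Fin n, (i : ℕ) ≤ (π i : ℕ) + 1 ∧ (π i : ℕ) ≤ (i : ℕ) + 1)
    (hends : ∀ i : Fin n, (π i : ℕ) = (i : ℕ) + 1 → (i : ℕ) = 0 ∨ (i : ℕ) = n - 2) :
    π ∈ avoidSet n Tset := by
  have key := key_of_cond1 π c1
  intro τ hτ
  have h3 : ∀ σ : Equiv.Perm (Fin 3), σ 2 < σ 0 → ¬ PermContains σ π := by
    rintro σ hσ ⟨f, hf, hp⟩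
    have h02 : (f 0 : ℕ) + 2 ≤ (f 2 : ℕ) := by
      have l1 : f 0 < f 1 := hf (by decide)
      have l2 : f 1 < f 2 := hf (by decide)
      rw [Fin.lt_def] at l1 l2
      omega
    have := (hp 2 0).1 hσ
    exact absurd (key (f 0) (f 2) h02) (lt_asymm this)
  rcases hτ with h | h | h | h
  · subst h; exact h3 p231 (by decide)
  · subst h; exact h3 p312 (by decide)
  · subst h; exact h3 p321 (by decide)
  · rw [Set.mem_singleton_iff] at h
    subst h
    rintro ⟨f, hf, hp⟩
    have h21 : π (f 2) < π (f 1) := (hp 2 1).1 (by decide)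
    have l01 : f 0 < f 1 := hf (by decide)
    have l12 : f 1 < f 2 := hf (by decide)
    have l23 : f 2 < f 3 := hf (by decide)
    rw [Fin.lt_def] at l01 l12 l23
    have hnot : ¬ ((f 1 : ℕ) + 2 ≤ (f 2 : ℕ)) := by
      intro hc
      exact absurd (key (f 1) (f 2) hc) (lt_asymm h21)
    have hsucc : (f 2 : ℕ) = (f 1 : ℕ) + 1 := by omega
    have hc1 := c1 (f 1)
    have hc2 := c1 (f 2)
    rw [Fin.lt_def] at h21
    have hval : (π (f 1) : ℕ) = (f 1 : ℕ) + 1 := by omega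
    rcases hends (f 1) hval with h' | h'
    · omega
    · have := (f 3).isLt
      omega

lemma cond1_one : ∀ i : Fin n, ((1 : Equiv.Perm (Fin n)) i : ℕ) ≤ (i : ℕ) + 1 ∧
    True := fun i => ⟨by rw [Equiv.Perm.one_apply]; omega, trivial⟩
lemma four_avoid (hn : 4 ≤ n) :
    ∀ π : Equiv.Perm (Fin n),
      (π = 1 ∨
       π = Equiv.swap (⟨0, by have := hn; omega⟩ : Fin n) ⟨1, by have := hn; omega⟩ ∨
       π = Equiv.swap (⟨n - 2, by have := hn; omega⟩ : Fin n) ⟨n - 1, by have := hn; omega⟩ ∨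
       π = Equiv.swap (⟨0, by have := hn; omega⟩ : Fin n) ⟨1, by have := hn; omega⟩ *
           Equiv.swap (⟨n - 2, by have := hn; omega⟩ : Fin n) ⟨n - 1, by have := hn; omega⟩) →
      π ∈ avoidSet n Tset := by
  have h0n : (0 : ℕ) < n := by omega
  have h1n : (1 : ℕ) < n := by omega
  have hn2 : n - 2 < n := by omega
  have hn1 : n - 1 < n := by omega
  rintro π (rfl | rfl | rfl | rfl)
  · refine avoid_of hn _ (fun i => ?_) (fun i h => ?_)
    · rw [Equiv.Perm.one_apply]; omega
    · rw [Equiv.Perm.one_apply] at h; omega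
  · refine avoid_of hn _ (fun i => ?_) (fun i h => ?_)
    · rw [swap_val_table 0 1 h0n h1n (by omega) i]; split_ifs <;> omega
    · rw [swap_val_table 0 1 h0n h1n (by omega) i] at h; split_ifs at h <;> omega
  · refine avoid_of hn _ (fun i => ?_) (fun i h => ?_)
    · rw [swap_val_table (n - 2) (n - 1) hn2 hn1 (by omega) i]
      have := i.isLt; split_ifs <;> omega
    · rw [swap_val_table (n - 2) (n - 1) hn2 hn1 (by omega) i] at h
      split_ifs at h <;> omega
  · refine avoid_of hn _ (fun i => ?_) (fun i h => ?_)
    · rw [Equiv.Perm.mul_apply,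
        swap_val_table 0 1 h0n h1n (by omega)
          ((Equiv.swap (⟨n - 2, by have := hn; omega⟩ : Fin n) ⟨n - 1, by have := hn; omega⟩) i),
        swap_val_table (n - 2) (n - 1) hn2 hn1 (by omega) i]
      have := i.isLt; split_ifs <;> omega
    · rw [Equiv.Perm.mul_apply,
        swap_val_table 0 1 h0n h1n (by omega)
          ((Equiv.swap (⟨n - 2, by have := hn; omega⟩ : Fin n) ⟨n - 1, by have := hn; omega⟩) i),
        swap_val_table (n - 2) (n - 1) hn2 hn1 (by omega) i] at h
      have := i.isLt; split_ifs at h <;> omega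

lemma set_eq (hn : 4 ≤ n) :
    avoidSet n Tset =
      ({1,
        Equiv.swap (⟨0, by have := hn; omega⟩ : Fin n) (⟨1, by have := hn; omega⟩ : Fin n),
        Equiv.swap (⟨n - 2, by have := hn; omega⟩ : Fin n) (⟨n - 1, by have := hn; omega⟩ : Fin n),
        Equiv.swap (⟨0, by have := hn; omega⟩ : Fin n) (⟨1, by have := hn; omega⟩ : Fin n) *
          Equiv.swap (⟨n - 2, by have := hn; omega⟩ : Fin n) (⟨n - 1, by have := hn; omega⟩ : Fin n)} :
        Set (Equiv.Perm (Fin n))) := by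
  ext π
  constructor
  · intro hπ
    simp only [Set.mem_insert_iff, Set.mem_singleton_iff]
    exact mem_four hn π hπ
  · intro hπ
    simp only [Set.mem_insert_iff, Set.mem_singleton_iff] at hπ
    exact four_avoid hn π hπ
lemma klein_iso (hn : 4 ≤ n) (h0n : 0 < n) (h1n : 1 < n) (hn2 : n - 2 < n) (hn1 : n - 1 < n) :
    Nonempty ((Subgroup.closure
      ({1,
        Equiv.swap (⟨0, h0n⟩ : Fin n) (⟨1, h1n⟩ : Fin n),
        Equiv.swap (⟨n - 2, hn2⟩ : Fin n) (⟨n - 1, hn1⟩ : Fin n),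
        Equiv.swap (⟨0, h0n⟩ : Fin n) (⟨1, h1n⟩ : Fin n) *
          Equiv.swap (⟨n - 2, hn2⟩ : Fin n) (⟨n - 1, hn1⟩ : Fin n)} :
        Set (Equiv.Perm (Fin n)))) ≃*
      Multiplicative (ZMod 2) × Multiplicative (ZMod 2)) := by
  set a : Equiv.Perm (Fin n) := Equiv.swap (⟨0, h0n⟩ : Fin n) (⟨1, h1n⟩ : Fin n) with hadef
  set b : Equiv.Perm (Fin n) :=
    Equiv.swap (⟨n - 2, hn2⟩ : Fin n) (⟨n - 1, hn1⟩ : Fin n) with hbdef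
  set S : Set (Equiv.Perm (Fin n)) := {1, a, b, a * b} with hSdef
  have hd : a.Disjoint b := by
    intro x
    by_cases hx : (x : ℕ) ≤ 1
    · right
      exact Equiv.swap_apply_of_ne_of_ne
        (fun he => by have := congrArg Fin.val he; have : (x : ℕ) = n - 2 := this; omega)
        (fun he => by have := congrArg Fin.val he; have : (x : ℕ) = n - 1 := this; omega)
    · left
      exact Equiv.swap_apply_of_ne_of_ne
        (fun he => by have := congrArg Fin.val he; have : (x : ℕ) = 0 := this; omega)
        (fun he => by have := congrArg Fin.val he; have : (x : ℕ) = 1 := this; omega)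
  have hc : Commute a b := hd.commute
  have ha2 : a * a = 1 := Equiv.swap_mul_self _ _
  have hb2 : b * b = 1 := Equiv.swap_mul_self _ _
  have hpow : ∀ (g : Equiv.Perm (Fin n)), g * g = 1 → ∀ v : ℕ, g ^ (v % 2) = g ^ v := by
    intro g hg v
    conv_rhs => rw [← Nat.div_add_mod v 2]
    rw [pow_add, pow_mul, show g ^ 2 = 1 by rw [pow_two, hg], one_pow, one_mul]
  let ψ : Multiplicative (ZMod 2) × Multiplicative (ZMod 2) →* Equiv.Perm (Fin n) :=
    MonoidHom.mk'
      (fun p => a ^ (Multiplicative.toAdd p.1).val * b ^ (Multiplicative.toAdd p.2).val)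
      (by
        intro p q
        simp only [Prod.fst_mul, Prod.snd_mul, toAdd_mul, ZMod.val_add]
        rw [hpow a ha2, hpow b hb2, pow_add, pow_add]
        exact (hc.pow_pow _ _).mul_mul_mul_comm _ _)
  -- values of a, b at key points
  have hva0 : ((a ⟨0, h0n⟩ : Fin n) : ℕ) = 1 := by
    have h := swap_val_table 0 1 h0n h1n (by omega) (⟨0, h0n⟩ : Fin n)
    have h' : ((a ⟨0, h0n⟩ : Fin n) : ℕ) =
        if (0 : ℕ) = 0 then 1 else if (0 : ℕ) = 1 then 0 else 0 := h
    rwa [if_pos rfl] at h'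
  have hvb0 : b ⟨0, h0n⟩ = ⟨0, h0n⟩ :=
    Equiv.swap_apply_of_ne_of_ne
      (fun he => by have : (0 : ℕ) = n - 2 := congrArg Fin.val he; omega)
      (fun he => by have : (0 : ℕ) = n - 1 := congrArg Fin.val he; omega)
  have hvbn : ((b ⟨n - 2, hn2⟩ : Fin n) : ℕ) = n - 1 := by
    have h' : ((b ⟨n - 2, hn2⟩ : Fin n) : ℕ) =
        if (n - 2 : ℕ) = n - 2 then n - 1 else if (n - 2 : ℕ) = n - 1 then n - 2 else n - 2 :=
      swap_val_table (n - 2) (n - 1) hn2 hn1 (by omega) (⟨n - 2, hn2⟩ : Fin n)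
    rwa [if_pos rfl] at h'
  have hane : a ≠ 1 := by
    intro h
    rw [h] at hva0
    have : (0 : ℕ) = 1 := by
      have := hva0
      rwa [Equiv.Perm.one_apply] at this
    omega
  have hbne : b ≠ 1 := by
    intro h
    rw [h] at hvbn
    have : (n - 2 : ℕ) = n - 1 := by
      have := hvbn
      rwa [Equiv.Perm.one_apply] at this
    omega
  have habne : a * b ≠ 1 := by
    intro h
    have : (a * b) ⟨0, h0n⟩ = ⟨0, h0n⟩ := by rw [h]; rfl
    rw [Equiv.Perm.mul_apply, hvb0] at this
    have h1 : ((a ⟨0, h0n⟩ : Fin n) : ℕ) = 0 := congrArg Fin.val this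
    omega
  have hinj : Function.Injective ψ := by
    rw [injective_iff_map_eq_one]
    intro p hp
    have hcases : ∀ q : Multiplicative (ZMod 2) × Multiplicative (ZMod 2),
        q = 1 ∨ q = (Multiplicative.ofAdd 1, 1) ∨ q = (1, Multiplicative.ofAdd 1) ∨
        q = (Multiplicative.ofAdd 1, Multiplicative.ofAdd 1) := by decide
    rcases hcases p with rfl | rfl | rfl | rfl
    · rfl
    · exfalso
      apply hane
      have h' : a ^ (1 : ZMod 2).val * b ^ (0 : ZMod 2).val = 1 := hp
      rwa [show (1 : ZMod 2).val = 1 from rfl, show (0 : ZMod 2).val = 0 from rfl,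
        pow_one, pow_zero, mul_one] at h'
    · exfalso
      apply hbne
      have h' : a ^ (0 : ZMod 2).val * b ^ (1 : ZMod 2).val = 1 := hp
      rwa [show (1 : ZMod 2).val = 1 from rfl, show (0 : ZMod 2).val = 0 from rfl,
        pow_one, pow_zero, one_mul] at h'
    · exfalso
      apply habne
      have h' : a ^ (1 : ZMod 2).val * b ^ (1 : ZMod 2).val = 1 := hp
      rwa [show (1 : ZMod 2).val = 1 from rfl, pow_one, pow_one] at h'
  have haS : a ∈ S := Set.mem_insert_iff.mpr (Or.inr (Set.mem_insert _ _))
  have hbS : b ∈ S :=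
    Set.mem_insert_iff.mpr (Or.inr (Set.mem_insert_iff.mpr (Or.inr (Set.mem_insert _ _))))
  have hsub : Subgroup.closure S ≤ ψ.range := by
    rw [Subgroup.closure_le]
    rintro x (rfl | rfl | rfl | hx)
    · exact ⟨1, map_one ψ⟩
    · refine ⟨(Multiplicative.ofAdd 1, 1), ?_⟩
      have : a ^ (1 : ZMod 2).val * b ^ (0 : ZMod 2).val = a := by
        rw [show (1 : ZMod 2).val = 1 from rfl, show (0 : ZMod 2).val = 0 from rfl,
          pow_one, pow_zero, mul_one]
      exact this
    · refine ⟨(1, Multiplicative.ofAdd 1), ?_⟩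
      have : a ^ (0 : ZMod 2).val * b ^ (1 : ZMod 2).val = b := by
        rw [show (1 : ZMod 2).val = 1 from rfl, show (0 : ZMod 2).val = 0 from rfl,
          pow_one, pow_zero, one_mul]
      exact this
    · rw [Set.mem_singleton_iff] at hx
      subst hx
      refine ⟨(Multiplicative.ofAdd 1, Multiplicative.ofAdd 1), ?_⟩
      have : a ^ (1 : ZMod 2).val * b ^ (1 : ZMod 2).val = a * b := by
        rw [show (1 : ZMod 2).val = 1 from rfl, pow_one, pow_one]
      exact this
  have hsup : ψ.range ≤ Subgroup.closure S := by
    rintro x ⟨p, rfl⟩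
    have haC : a ∈ Subgroup.closure S := Subgroup.subset_closure haS
    have hbC : b ∈ Subgroup.closure S := Subgroup.subset_closure hbS
    exact mul_mem (pow_mem haC _) (pow_mem hbC _)
  have heq : ψ.range = Subgroup.closure S := le_antisymm hsup hsub
  exact ⟨(MulEquiv.subgroupCongr heq.symm).trans (MonoidHom.ofInjective hinj).symm⟩
end AvoidKlein

theorem avoid_231_312_321_1324_klein (n : ℕ) (hn : 4 ≤ n) :
    avoidSet n ({⟨3, p231⟩, ⟨3, p312⟩, ⟨3, p321⟩, ⟨4, p1324⟩} :
        Set (Σ k : ℕ, Equiv.Perm (Fin k))) =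
      ({1,
        Equiv.swap (⟨0, by omega⟩ : Fin n) (⟨1, by omega⟩ : Fin n),
        Equiv.swap (⟨n - 2, by omega⟩ : Fin n) (⟨n - 1, by omega⟩ : Fin n),
        Equiv.swap (⟨0, by omega⟩ : Fin n) (⟨1, by omega⟩ : Fin n) *
          Equiv.swap (⟨n - 2, by omega⟩ : Fin n) (⟨n - 1, by omega⟩ : Fin n)} :
        Set (Equiv.Perm (Fin n))) ∧
    Nonempty (Subgroup.closure
      (avoidSet n ({⟨3, p231⟩, ⟨3, p312⟩, ⟨3, p321⟩, ⟨4, p1324⟩} :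
        Set (Σ k : ℕ, Equiv.Perm (Fin k)))) ≃*
          Multiplicative (ZMod 2) × Multiplicative (ZMod 2)) := by
  have h1 : avoidSet n ({⟨3, p231⟩, ⟨3, p312⟩, ⟨3, p321⟩, ⟨4, p1324⟩} :
        Set (Σ k : ℕ, Equiv.Perm (Fin k))) =
      ({1,
        Equiv.swap (⟨0, by omega⟩ : Fin n) (⟨1, by omega⟩ : Fin n),
        Equiv.swap (⟨n - 2, by omega⟩ : Fin n) (⟨n - 1, by omega⟩ : Fin n),
        Equiv.swap (⟨0, by omega⟩ : Fin n) (⟨1, by omega⟩ : Fin n) *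
          Equiv.swap (⟨n - 2, by omega⟩ : Fin n) (⟨n - 1, by omega⟩ : Fin n)} :
        Set (Equiv.Perm (Fin n))) := AvoidKlein.set_eq hn
  refine ⟨h1, ?_⟩
  rw [h1]
  exact AvoidKlein.klein_iso hn (by omega) (by omega) (by omega) (by omega)
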